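/- Let f : [0,1] → [0,1] be normal and convex with R¹(f) < 1. Then, for all x ∈ [0,1), f^R(x) = sup{f(y) : y ∈ [x, 1)}. -/

import Mathlib

open Set Classical

noncomputable section

/-- Left envelope: `f^L(x) = sup {f y : 0 ≤ y ≤ x}`. -/
def fL (f : ℝ → ℝ) (x : ℝ) : ℝ := sSup (f '' Set.Icc 0 x)

/-- Weak left envelope: `f^{Lw}(x) = sup {f y : 0 ≤ y < x}` (for `x ∈ (0,1]`). -/
def fLw (f : ℝ → ℝ) (x : ℝ) : ℝ := sSup (f '' Set.Ico 0 x)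

/-- Right envelope: `f^R(x) = sup {f y : x ≤ y ≤ 1}`. -/
def fR (f : ℝ → ℝ) (x : ℝ) : ℝ := sSup (f '' Set.Icc x 1)

/-- `f` maps `[0,1]` into `[0,1]`. -/
def MapsI (f : ℝ → ℝ) : Prop := ∀ x ∈ Set.Icc (0:ℝ) 1, f x ∈ Set.Icc (0:ℝ) 1

/-- `f` is normal: `sup f = 1` on `[0,1]`. -/
def NormalFn (f : ℝ → ℝ) : Prop := sSup (f '' Set.Icc 0 1) = 1

/-- `f` is convex: `f y ≥ min (f x) (f z)` whenever `0 ≤ x ≤ y ≤ z ≤ 1`. -/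
def ConvexFn (f : ℝ → ℝ) : Prop :=
  ∀ x y z : ℝ, 0 ≤ x → x ≤ y → y ≤ z → z ≤ 1 → min (f x) (f z) ≤ f y

/-- Convolution intersection: `(f ⊓ g)(x) = sup {min (f y) (g z) : min y z = x}`. -/
def inter (f g : ℝ → ℝ) (x : ℝ) : ℝ :=
  sSup {v | ∃ y ∈ Set.Icc (0:ℝ) 1, ∃ z ∈ Set.Icc (0:ℝ) 1, min y z = x ∧ v = min (f y) (g z)}

/-- Convolution union: `(f ⊔ g)(x) = sup {min (f y) (g z) : max y z = x}`. -/
def union (f g : ℝ → ℝ) (x : ℝ) : ℝ :=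
  sSup {v | ∃ y ∈ Set.Icc (0:ℝ) 1, ∃ z ∈ Set.Icc (0:ℝ) 1, max y z = x ∧ v = min (f y) (g z)}

/-- `L₁(f) = inf {x ∈ [0,1] : f^L(x) = 1}`. -/
def L1 (f : ℝ → ℝ) : ℝ := sInf {x ∈ Set.Icc (0:ℝ) 1 | fL f x = 1}

/-- `R¹(f) = sup {x ∈ [0,1] : f^R(x) = 1}`. -/
def R1 (f : ℝ → ℝ) : ℝ := sSup {x ∈ Set.Icc (0:ℝ) 1 | fR f x = 1}

/-- The characteristic function `1_{{1}}`. -/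
def ind1 : ℝ → ℝ := fun x => if x = 1 then 1 else 0

/-- The modified intersection `f ⋆ g`. -/
def star (f g : ℝ → ℝ) : ℝ → ℝ :=
  if Set.EqOn f ind1 (Set.Icc (0:ℝ) 1) then g
  else if Set.EqOn g ind1 (Set.Icc (0:ℝ) 1) then f
  else if min (f 1) (g 1) = 1 then inter f g
  else fun x => if x = 1 then 0 else inter f g x

/-- if `f` is normal convex and `R¹(f) < 1`, then for all `x ∈ [0,1)`,
`f^R(x) = sup {f y : y ∈ [x,1)}`. -/
theorem stmt_9 (f : ℝ → ℝ) (hf : MapsI f) (hfn : NormalFn f) (hfc : ConvexFn f)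
    (hR : R1 f < 1) :
    ∀ x : ℝ, 0 ≤ x → x < 1 → fR f x = sSup (f '' Set.Ico x 1) := by
  intro x hx0 hx1
  have hb : ∀ s ⊆ Set.Icc (0:ℝ) 1, BddAbove (f '' s) := by
    intro s hs
    exact ⟨1, fun v ⟨y, hy, hyv⟩ => hyv ▸ (hf y (hs hy)).2⟩
  have hf1le : f 1 ≤ 1 := (hf 1 ⟨zero_le_one, le_refl 1⟩).2
  have hf1lt : f 1 < 1 := by
    rcases lt_or_eq_of_le hf1le with h | h
    · exact h
    · exfalso
      have h1mem : (1:ℝ) ∈ {x ∈ Set.Icc (0:ℝ) 1 | fR f x = 1} := by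
        refine ⟨⟨zero_le_one, le_refl 1⟩, ?_⟩
        unfold fR
        apply le_antisymm
        · exact csSup_le ⟨f 1, 1, ⟨le_refl 1, le_refl 1⟩, rfl⟩
            (fun v ⟨y, hy, hv⟩ => hv ▸ (hf y ⟨le_trans zero_le_one hy.1, hy.2⟩).2)
        · have := le_csSup (hb _ (fun z (hz : z ∈ Set.Icc (1:ℝ) 1) =>
            ⟨le_trans zero_le_one hz.1, hz.2⟩)) ⟨1, ⟨le_refl 1, le_refl 1⟩, rfl⟩
          linarith
      have : (1:ℝ) ≤ R1 f :=
        le_csSup ⟨1, fun z hz => hz.1.2⟩ h1mem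
      linarith
  have hex : ∃ y ∈ Set.Icc (0:ℝ) 1, f 1 < f y := by
    by_contra h
    push_neg at h
    have : sSup (f '' Set.Icc 0 1) ≤ f 1 :=
      csSup_le ⟨f 1, 1, ⟨zero_le_one, le_refl 1⟩, rfl⟩
        (fun v ⟨y, hy, hv⟩ => hv ▸ h y hy)
    rw [hfn] at this
    linarith
  obtain ⟨y, hy, hfy⟩ := hex
  have hw : ∃ w ∈ Set.Ico x 1, f 1 ≤ f w := by
    rcases le_or_gt x y with h | h
    · have hy1 : y < 1 := by
        rcases lt_or_eq_of_le hy.2 with h' | h'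
        · exact h'
        · exfalso; rw [h'] at hfy; linarith
      exact ⟨y, ⟨h, hy1⟩, le_of_lt hfy⟩
    · refine ⟨x, ⟨le_refl x, hx1⟩, ?_⟩
      have hmin := hfc y x 1 hy.1 h.le hx1.le (le_refl 1)
      rwa [min_eq_right hfy.le] at hmin
  obtain ⟨w, hw1, hw2⟩ := hw
  have hIcoSub : Set.Ico x 1 ⊆ Set.Icc (0:ℝ) 1 := fun z hz => ⟨le_trans hx0 hz.1, hz.2.le⟩
  have hIccSub : Set.Icc x 1 ⊆ Set.Icc (0:ℝ) 1 := fun z hz => ⟨le_trans hx0 hz.1, hz.2⟩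
  unfold fR
  apply le_antisymm
  · have hne : (Set.Icc x 1).Nonempty := Set.nonempty_Icc.2 hx1.le
    apply csSup_le (hne.image f)
    rintro v ⟨z, hz, rfl⟩
    rcases lt_or_eq_of_le hz.2 with h | h
    · exact le_csSup (hb _ hIcoSub) ⟨z, ⟨hz.1, h⟩, rfl⟩
    · rw [h]
      exact le_trans hw2 (le_csSup (hb _ hIcoSub) ⟨w, hw1, rfl⟩)
  · exact csSup_le_csSup (hb _ hIccSub) ⟨f w, w, hw1, rfl⟩
      (Set.image_mono (f := f) Set.Ico_subset_Icc_self)
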